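/- Let n ≥ 2 be an integer and let P be a convex integer polygon containing no point of nℤ² that contains a segment with ℓ(P) + 1 integer points lying on a line x₁ = c, where c is an integer with 0 ≤ c ≤ n. Then the segments [(0,n),(−n,n)] and [(n,0),(2n,0)] cannot both split P; likewise, the segments [(0,0),(−n,0)] and [(n,n),(2n,n)] cannot both split P. -/

import Mathlib

open Set

/-- The point of `ℝ²` corresponding to an integer point. -/
def intPt (p : ℤ × ℤ) : ℝ × ℝ := ((p.1 : ℝ), (p.2 : ℝ))

/-- A convex integer polygon: the convex hull of a finite set of integer points,
with nonempty interior. -/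
def IsConvexIntegerPolygon (P : Set (ℝ × ℝ)) : Prop :=
  ∃ V : Finset (ℤ × ℤ), P = convexHull ℝ (intPt '' ↑V) ∧ (interior P).Nonempty

/-- `P` contains no point of the lattice `nℤ² = (nℤ) × (nℤ)`. -/
def FreeOfLattice (n : ℕ) (P : Set (ℝ × ℝ)) : Prop :=
  ∀ u v : ℤ, intPt ((n : ℤ) * u, (n : ℤ) * v) ∉ P

/-- The segment `[p, q]`, lying on a line `L` through `p` and `q`, splits `P`:
`P ∩ L ⊆ [p, q]` and both open half-planes bounded by `L` contain points of `P`. -/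
def SegSplits (P : Set (ℝ × ℝ)) (p q : ℝ × ℝ) : Prop :=
  ∃ a b c : ℝ, ¬(a = 0 ∧ b = 0) ∧
    a * p.1 + b * p.2 = c ∧ a * q.1 + b * q.2 = c ∧
    (∀ x ∈ P, a * x.1 + b * x.2 = c → x ∈ segment ℝ p q) ∧
    (∃ x ∈ P, a * x.1 + b * x.2 < c) ∧ (∃ x ∈ P, c < a * x.1 + b * x.2)

/-- The vertical line `x₁ = c` splits `P`. -/
def VLineSplits (P : Set (ℝ × ℝ)) (c : ℝ) : Prop :=
  (∃ x ∈ P, x.1 < c) ∧ (∃ x ∈ P, c < x.1)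

/-- The horizontal line `x₂ = c` splits `P`. -/
def HLineSplits (P : Set (ℝ × ℝ)) (c : ℝ) : Prop :=
  (∃ x ∈ P, x.2 < c) ∧ (∃ x ∈ P, c < x.2)

/-- A line in the plane. -/
def IsLine (L : Set (ℝ × ℝ)) : Prop :=
  ∃ a b c : ℝ, ¬(a = 0 ∧ b = 0) ∧ L = {x : ℝ × ℝ | a * x.1 + b * x.2 = c}

/-- The set of integer points of the plane. -/
def intPts : Set (ℝ × ℝ) := {x : ℝ × ℝ | ∃ p : ℤ × ℤ, x = intPt p}

/-- The lattice diameter of `P` equals `ℓ`: the maximum over all lines `L` of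
`|P ∩ ℤ² ∩ L| - 1` is `ℓ`. -/
def LatticeDiamIs (P : Set (ℝ × ℝ)) (ℓ : ℕ) : Prop :=
  (∃ L, IsLine L ∧ (P ∩ intPts ∩ L).ncard = ℓ + 1) ∧
  ∀ L, IsLine L → (P ∩ intPts ∩ L).ncard ≤ ℓ + 1


namespace Stmt16


lemma intPt_injective : Function.Injective intPt := by
  rintro ⟨a, b⟩ ⟨c, d⟩ h
  simp only [intPt, Prod.mk.injEq] at h
  exact Prod.ext (by exact_mod_cast h.1) (by exact_mod_cast h.2)

lemma combo_mem {P : Set (ℝ × ℝ)} (hP : Convex ℝ P) {p q : ℝ × ℝ} (hp : p ∈ P) (hq : q ∈ P)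
    {t : ℝ} (h0 : 0 ≤ t) (h1 : t ≤ 1) :
    ((1 - t) * p.1 + t * q.1, (1 - t) * p.2 + t * q.2) ∈ P := by
  have h2 := hP hp hq (by linarith : (0:ℝ) ≤ 1 - t) h0 (by ring)
  have h3 : (1 - t) • p + t • q = ((1 - t) * p.1 + t * q.1, (1 - t) * p.2 + t * q.2) := by
    simp [Prod.ext_iff, Prod.smul_fst, Prod.smul_snd, smul_eq_mul]
  rwa [h3] at h2

lemma horiz_mem {P : Set (ℝ × ℝ)} (hP : Convex ℝ P) {p q z : ℝ × ℝ} (hp : p ∈ P) (hq : q ∈ P)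
    (hpy : p.2 = z.2) (hqy : q.2 = z.2) (h1 : p.1 ≤ z.1) (h2 : z.1 ≤ q.1) : z ∈ P := by
  rcases eq_or_lt_of_le (le_trans h1 h2) with he | hlt
  · have hz : z = p := Prod.ext (le_antisymm (by rw [he]; exact h2) h1) hpy.symm
    rwa [hz]
  · set t : ℝ := (z.1 - p.1) / (q.1 - p.1) with ht
    have hd : (0:ℝ) < q.1 - p.1 := by linarith
    have h0 : 0 ≤ t := div_nonneg (by linarith) (le_of_lt hd)
    have h1' : t ≤ 1 := by rw [div_le_one hd]; linarith
    have := combo_mem hP hp hq h0 h1'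
    have hz : ((1 - t) * p.1 + t * q.1, (1 - t) * p.2 + t * q.2) = z := by
      have e1 : (1 - t) * p.1 + t * q.1 = p.1 + t * (q.1 - p.1) := by ring
      have e2 : t * (q.1 - p.1) = z.1 - p.1 := by
        rw [ht, div_mul_cancel₀]; exact ne_of_gt hd
      refine Prod.ext ?_ ?_
      · simp only []; rw [e1, e2]; ring
      · simp only []; rw [hpy, hqy]; ring
    rwa [hz] at this

lemma cross_mem {P : Set (ℝ × ℝ)} (hP : Convex ℝ P) {p q : ℝ × ℝ} (hp : p ∈ P) (hq : q ∈ P)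
    (hlt : p.2 < q.2) {y : ℝ} (h1 : p.2 ≤ y) (h2 : y ≤ q.2) :
    (p.1 + (y - p.2) / (q.2 - p.2) * (q.1 - p.1), y) ∈ P := by
  set t : ℝ := (y - p.2) / (q.2 - p.2) with ht
  have hd : (0:ℝ) < q.2 - p.2 := by linarith
  have h0 : 0 ≤ t := div_nonneg (by linarith) (le_of_lt hd)
  have h1' : t ≤ 1 := by rw [div_le_one hd]; linarith
  have := combo_mem hP hp hq h0 h1'
  have hz : ((1 - t) * p.1 + t * q.1, (1 - t) * p.2 + t * q.2)
      = (p.1 + (y - p.2) / (q.2 - p.2) * (q.1 - p.1), y) := by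
    have e2 : t * (q.2 - p.2) = y - p.2 := by
      rw [ht, div_mul_cancel₀]; exact ne_of_gt hd
    refine Prod.ext ?_ ?_
    · simp only []; rw [← ht]; ring
    · simp only []; nlinarith [e2]
  rwa [hz] at this



/-- if a point of the hull is above a horizontal level, some generator is above it -/
lemma exists_gen_above {V : Finset (ℤ × ℤ)} {z : ℝ × ℝ}
    (hz : z ∈ convexHull ℝ (intPt '' ↑V)) {t : ℝ} (h : t < z.2) :
    ∃ v : ℤ × ℤ, v ∈ V ∧ t < (v.2 : ℝ) := by
  by_contra hc
  push_neg at hc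
  have hconv : Convex ℝ {w : ℝ × ℝ | w.2 ≤ t} := by
    intro x hx y hy a b ha hb hab
    simp only [mem_setOf_eq] at *
    have : (a • x + b • y).2 = a * x.2 + b * y.2 := by
      simp [Prod.smul_snd, smul_eq_mul]
    rw [this]
    have key : a * t + b * t = t := by linear_combination t * hab
    nlinarith [mul_le_mul_of_nonneg_left hx ha, mul_le_mul_of_nonneg_left hy hb]
  have hsub : intPt '' ↑V ⊆ {w : ℝ × ℝ | w.2 ≤ t} := by
    rintro _ ⟨p, hp, rfl⟩
    exact hc p (by exact_mod_cast hp)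
  have := convexHull_min hsub hconv hz
  simp only [mem_setOf_eq] at this
  linarith

lemma exists_gen_below {V : Finset (ℤ × ℤ)} {z : ℝ × ℝ}
    (hz : z ∈ convexHull ℝ (intPt '' ↑V)) {t : ℝ} (h : z.2 < t) :
    ∃ v : ℤ × ℤ, v ∈ V ∧ (v.2 : ℝ) < t := by
  by_contra hc
  push_neg at hc
  have hconv : Convex ℝ {w : ℝ × ℝ | t ≤ w.2} := by
    intro x hx y hy a b ha hb hab
    simp only [mem_setOf_eq] at *
    have : (a • x + b • y).2 = a * x.2 + b * y.2 := by
      simp [Prod.smul_snd, smul_eq_mul]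
    rw [this]
    have key : a * t + b * t = t := by linear_combination t * hab
    nlinarith [mul_le_mul_of_nonneg_left hx ha, mul_le_mul_of_nonneg_left hy hb]
  have hsub : intPt '' ↑V ⊆ {w : ℝ × ℝ | t ≤ w.2} := by
    rintro _ ⟨p, hp, rfl⟩
    exact hc p (by exact_mod_cast hp)
  have := convexHull_min hsub hconv hz
  simp only [mem_setOf_eq] at this
  linarith

lemma lattice_finite (V : Finset (ℤ × ℤ)) :
    ((convexHull ℝ (intPt '' ↑V)) ∩ intPts).Finite := by
  have hcpt : IsCompact (convexHull ℝ (intPt '' ↑V)) :=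
    ((V : Set (ℤ × ℤ)).toFinite.image intPt).isCompact_convexHull ℝ
  obtain ⟨R, hR⟩ := isBounded_iff_forall_norm_le.mp hcpt.isBounded
  have hfin : (Set.Icc (-⌈R⌉, -⌈R⌉) (⌈R⌉, ⌈R⌉) : Set (ℤ × ℤ)).Finite := Set.finite_Icc _ _
  refine Set.Finite.subset (hfin.image intPt) ?_
  rintro z ⟨hzP, p, rfl⟩
  refine ⟨p, ?_, rfl⟩
  have h1 := hR _ hzP
  have hx : |(p.1 : ℝ)| ≤ R := by
    calc |(p.1 : ℝ)| = ‖(intPt p).1‖ := by simp [intPt]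
    _ ≤ ‖intPt p‖ := norm_fst_le _
    _ ≤ R := h1
  have hy : |(p.2 : ℝ)| ≤ R := by
    calc |(p.2 : ℝ)| = ‖(intPt p).2‖ := by simp [intPt]
    _ ≤ ‖intPt p‖ := norm_snd_le _
    _ ≤ R := h1
  rw [abs_le] at hx hy
  constructor
  · constructor
    · have : (-⌈R⌉ : ℝ) ≤ (p.1 : ℝ) := le_trans (by simpa using neg_le_neg (Int.le_ceil R)) hx.1
      exact_mod_cast this
    · have : ((p.2 : ℝ)) ≥ (-⌈R⌉ : ℝ) := le_trans (by simpa using neg_le_neg (Int.le_ceil R)) hy.1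
      exact_mod_cast this
  · constructor
    · have : (p.1 : ℝ) ≤ (⌈R⌉ : ℝ) := le_trans hx.2 (Int.le_ceil R)
      exact_mod_cast this
    · have : (p.2 : ℝ) ≤ (⌈R⌉ : ℝ) := le_trans hy.2 (Int.le_ceil R)
      exact_mod_cast this

/-- ℓ+2 collinear lattice points in P contradict the diameter bound -/
lemma collinear_contra (V : Finset (ℤ × ℤ)) (P : Set (ℝ × ℝ))
    (hPdef : P = convexHull ℝ (intPt '' ↑V)) {ℓ : ℕ}
    (hdiam : ∀ L, IsLine L → (P ∩ intPts ∩ L).ncard ≤ ℓ + 1)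
    (x d : ℤ × ℤ) (hd : d ≠ 0)
    (hmem : ∀ j : ℕ, j ≤ ℓ + 1 → intPt (x.1 + j * d.1, x.2 + j * d.2) ∈ P) : False := by
  set L : Set (ℝ × ℝ) :=
    {z : ℝ × ℝ | (d.2 : ℝ) * z.1 + (-(d.1 : ℝ)) * z.2 = (d.2 : ℝ) * x.1 + (-(d.1 : ℝ)) * x.2}
    with hL
  have hline : IsLine L := by
    refine ⟨(d.2 : ℝ), -(d.1 : ℝ), _, ?_, rfl⟩
    rintro ⟨h1, h2⟩
    apply hd
    have e1 : d.1 = 0 := by exact_mod_cast neg_eq_zero.mp h2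
    have e2 : d.2 = 0 := by exact_mod_cast h1
    exact Prod.ext e1 e2
  set f : ℕ → ℝ × ℝ := fun j => intPt (x.1 + j * d.1, x.2 + j * d.2) with hf
  have hinj : Set.InjOn f (Finset.range (ℓ + 2)) := by
    intro j hj k hk he
    have he' : (x.1 + j * d.1, x.2 + j * d.2) = (x.1 + k * d.1, x.2 + k * d.2) :=
      intPt_injective he
    rw [Prod.mk.injEq] at he'
    rcases Prod.mk.injEq .. ▸ (show ¬(d.1 = 0 ∧ d.2 = 0) by
      intro hq; exact hd (Prod.ext hq.1 hq.2)) with _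
    by_cases h1 : d.1 = 0
    · have h2 : d.2 ≠ 0 := by
        intro h2; exact hd (Prod.ext h1 h2)
      have : (j : ℤ) * d.2 = (k : ℤ) * d.2 := by linarith [he'.2]
      have : (j : ℤ) = k := by
        exact mul_right_cancel₀ h2 this
      exact_mod_cast this
    · have : (j : ℤ) * d.1 = (k : ℤ) * d.1 := by linarith [he'.1]
      have : (j : ℤ) = k := mul_right_cancel₀ h1 this
      exact_mod_cast this
  set F : Finset (ℝ × ℝ) := (Finset.range (ℓ + 2)).image f with hF
  have hcard : F.card = ℓ + 2 := by
    rw [hF, Finset.card_image_of_injOn (by simpa using hinj)]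
    simp
  have hsub : (F : Set (ℝ × ℝ)) ⊆ P ∩ intPts ∩ L := by
    intro z hz
    simp only [hF, Finset.coe_image, Finset.coe_range, mem_image, mem_Iio] at hz
    obtain ⟨j, hj, rfl⟩ := hz
    refine ⟨⟨hmem j (by omega), ⟨_, rfl⟩⟩, ?_⟩
    simp only [hL, mem_setOf_eq, hf, intPt]
    push_cast
    ring
  have hfin : (P ∩ intPts ∩ L).Finite := by
    apply Set.Finite.subset (lattice_finite V)
    intro z hz
    exact ⟨hPdef ▸ hz.1.1, hz.1.2⟩
  have hle := Set.ncard_le_ncard hsub hfin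
  rw [Set.ncard_coe_finset, hcard] at hle
  have := hdiam L hline
  omega

set_option maxHeartbeats 1600000 in
lemma core (n ℓ : ℕ) (hn : 2 ≤ n) (V : Finset (ℤ × ℤ)) (P : Set (ℝ × ℝ))
    (hPdef : P = convexHull ℝ (intPt '' ↑V))
    (hfree : FreeOfLattice n P)
    (hdiam : ∀ L, IsLine L → (P ∩ intPts ∩ L).ncard ≤ ℓ + 1)
    (c a : ℤ) (hc0 : 0 ≤ c) (hcn : c ≤ (n : ℤ))
    (hB : intPt (c, a) ∈ P) (hT : intPt (c, a + ℓ) ∈ P)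
    (hTop : ∀ z ∈ P, z.2 = (n : ℝ) → z.1 ≤ 0)
    (hBot : ∀ z ∈ P, z.2 = 0 → (n : ℝ) ≤ z.1)
    (habove : ∃ z ∈ P, (n : ℝ) < z.2)
    (hbelow : ∃ z ∈ P, z.2 < 0) : False := by
  have hconv : Convex ℝ P := hPdef ▸ convex_convexHull ℝ _
  obtain ⟨z1, hz1P, hz1⟩ := habove
  obtain ⟨r, hrV, hr2R⟩ := exists_gen_above (hPdef ▸ hz1P) hz1
  have hr2 : (n : ℤ) < r.2 := by exact_mod_cast hr2R
  have hrP : intPt r ∈ P := by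
    rw [hPdef]; exact subset_convexHull ℝ _ (mem_image_of_mem _ (Finset.mem_coe.mpr hrV))
  obtain ⟨z2, hz2P, hz2⟩ := hbelow
  obtain ⟨s, hsV, hs2R⟩ := exists_gen_below (hPdef ▸ hz2P) hz2
  have hs2 : s.2 < 0 := by exact_mod_cast hs2R
  have hsP : intPt s ∈ P := by
    rw [hPdef]; exact subset_convexHull ℝ _ (mem_image_of_mem _ (Finset.mem_coe.mpr hsV))
  have hnR : (0:ℝ) < (n:ℝ) := by exact_mod_cast (by omega : 0 < n)
  have hs2n : (s.2:ℝ) < (r.2:ℝ) := by exact_mod_cast (by omega : s.2 < r.2)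
  have hsr : (intPt s).2 < (intPt r).2 := by simp only [intPt]; exact hs2n
  have hDpos : (0:ℝ) < (r.2 : ℝ) - (s.2 : ℝ) := by linarith
  -- crossing at height n
  have hu := cross_mem hconv hsP hrP hsr (y := (n:ℝ))
    (by simp only [intPt]; linarith) (by simp only [intPt]; linarith)
  simp only [intPt] at hu
  have hu1le : ((s.1:ℝ) + ((n:ℝ) - (s.2:ℝ)) / ((r.2:ℝ) - (s.2:ℝ)) * ((r.1:ℝ) - (s.1:ℝ))) ≤ 0 :=
    hTop _ hu rfl
  set u1 : ℝ := (s.1:ℝ) + ((n:ℝ) - (s.2:ℝ)) / ((r.2:ℝ) - (s.2:ℝ)) * ((r.1:ℝ) - (s.1:ℝ))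
    with hu1def
  clear_value u1
  have hu1 : u1 < 0 := by
    rcases lt_or_eq_of_le hu1le with h | h
    · exact h
    · exfalso
      apply hfree 0 1
      have he : intPt ((n:ℤ) * 0, (n:ℤ) * 1) = (u1, (n:ℝ)) := by
        simp [intPt, h]
      rw [he]; exact hu
  -- crossing at height 0
  have hv := cross_mem hconv hsP hrP hsr (y := (0:ℝ))
    (by simp only [intPt]; linarith) (by simp only [intPt]; linarith)
  simp only [intPt] at hv
  have hv1ge : (n:ℝ) ≤ ((s.1:ℝ) + ((0:ℝ) - (s.2:ℝ)) / ((r.2:ℝ) - (s.2:ℝ)) * ((r.1:ℝ) - (s.1:ℝ))) :=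
    hBot _ hv rfl
  set v1 : ℝ := (s.1:ℝ) + ((0:ℝ) - (s.2:ℝ)) / ((r.2:ℝ) - (s.2:ℝ)) * ((r.1:ℝ) - (s.1:ℝ))
    with hv1def
  clear_value v1
  have hv1 : (n:ℝ) < v1 := by
    rcases lt_or_eq_of_le hv1ge with h | h
    · exact h
    · exfalso
      apply hfree 1 0
      have he : intPt ((n:ℤ) * 1, (n:ℤ) * 0) = (v1, (0:ℝ)) := by
        simp [intPt, ← h]
      rw [he]; exact hv
  -- the key slope inequality : s1 - r1 > r2 - s2
  have hdiffR : v1 - u1 = (n : ℝ) * ((s.1:ℝ) - (r.1:ℝ)) / ((r.2:ℝ) - (s.2:ℝ)) := by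
    rw [hu1def, hv1def]
    field_simp
    ring
  have hkeyR : (r.2:ℝ) - (s.2:ℝ) < (s.1:ℝ) - (r.1:ℝ) := by
    have h1 : (n:ℝ) < (n : ℝ) * ((s.1:ℝ) - (r.1:ℝ)) / ((r.2:ℝ) - (s.2:ℝ)) := by
      rw [← hdiffR]; linarith
    rw [lt_div_iff₀ hDpos] at h1
    nlinarith
  have hkey : r.2 - s.2 + 1 ≤ s.1 - r.1 := by
    have : r.2 - s.2 < s.1 - r.1 := by exact_mod_cast hkeyR
    omega
  -- r.1 < 0
  have hr1R : (r.1 : ℝ) < 0 := by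
    have hexp : u1 - (r.1:ℝ) = (((r.2:ℝ) - n) / ((r.2:ℝ) - (s.2:ℝ))) * ((s.1:ℝ) - (r.1:ℝ)) := by
      rw [hu1def]; field_simp; ring
    have hpos : 0 < (((r.2:ℝ) - n) / ((r.2:ℝ) - (s.2:ℝ))) * ((s.1:ℝ) - (r.1:ℝ)) := by
      apply mul_pos (div_pos (by linarith) hDpos) (by linarith)
    linarith
  have hr1 : r.1 < 0 := by exact_mod_cast hr1R
  -- s.1 > n
  have hs1R : (n:ℝ) < (s.1 : ℝ) := by
    have hexp : (s.1:ℝ) - v1 = (((0:ℝ) - s.2) / ((r.2:ℝ) - (s.2:ℝ))) * ((s.1:ℝ) - (r.1:ℝ)) := by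
      rw [hv1def]; field_simp; ring
    have hpos : 0 ≤ (((0:ℝ) - s.2) / ((r.2:ℝ) - (s.2:ℝ))) * ((s.1:ℝ) - (r.1:ℝ)) := by
      apply mul_nonneg (le_of_lt (div_pos (by linarith) hDpos)) (by linarith)
    linarith
  have hs1 : (n:ℤ) < s.1 := by exact_mod_cast hs1R
  have hcR : (c:ℝ) ≤ (n:ℝ) := by exact_mod_cast hcn
  have hc0R : (0:ℝ) ≤ (c:ℝ) := by exact_mod_cast hc0
  -- 1 ≤ a
  have ha1 : 1 ≤ a := by
    by_contra h'
    push_neg at h'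
    rcases lt_or_eq_of_le (by omega : a ≤ 0) with ha0 | ha0
    · -- a < 0 : crossing of B -- r at height 0 lies left of n
      have haR : (a:ℝ) < 0 := by exact_mod_cast ha0
      have hr2R0 : (0:ℝ) < (r.2:ℝ) := by linarith
      have hBr : (intPt (c, a)).2 < (intPt r).2 := by
        simp only [intPt]; linarith
      have hw := cross_mem hconv hB hrP hBr (y := (0:ℝ))
        (by simp only [intPt]; linarith) (by simp only [intPt]; linarith)
      simp only [intPt] at hw
      have hwge : (n:ℝ) ≤ (c:ℝ) + (((0:ℝ) - (a:ℝ)) / ((r.2:ℝ) - (a:ℝ))) * ((r.1:ℝ) - (c:ℝ)) :=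
        hBot _ hw rfl
      set t : ℝ := ((0:ℝ) - (a:ℝ)) / ((r.2:ℝ) - (a:ℝ)) with htdef
      clear_value t
      have hr2aR' : (0:ℝ) < (r.2:ℝ) - (a:ℝ) := by linarith
      have ht0 : 0 < t := by
        rw [htdef]; apply div_pos (by linarith) hr2aR'
      have ht1 : t ≤ 1 := by
        rw [htdef, div_le_one hr2aR']; linarith
      have hwval : (c:ℝ) + t * ((r.1:ℝ) - (c:ℝ)) = (1 - t) * (c:ℝ) + t * (r.1:ℝ) := by ring
      rw [hwval] at hwge
      nlinarith [mul_nonneg (by linarith : (0:ℝ) ≤ 1 - t) (by linarith : (0:ℝ) ≤ (n:ℝ) - c),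
        mul_pos ht0 (by linarith : (0:ℝ) < (n:ℝ) - r.1)]
    · -- a = 0 : B on row 0
      have h0 : (intPt (c, a)).2 = 0 := by simp [intPt, ha0]
      have hge := hBot _ hB h0
      have hceq : c = (n:ℤ) := by
        have h1 : (n:ℝ) ≤ (c:ℝ) := by simpa [intPt] using hge
        have h2 : (n:ℤ) ≤ c := by exact_mod_cast h1
        omega
      apply hfree 1 0
      have he : ((n:ℤ) * 1, (n:ℤ) * 0) = (c, a) := by
        rw [Prod.mk.injEq]; omega
      rw [he]; exact hB
  -- a + ℓ ≤ n - 1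
  have hbn : a + (ℓ:ℤ) ≤ (n:ℤ) - 1 := by
    by_contra h'
    push_neg at h'
    have hbR' : (n:ℝ) ≤ ((a:ℝ) + (ℓ:ℝ)) := by
      have : (n:ℤ) ≤ a + ℓ := by omega
      exact_mod_cast this
    rcases lt_or_eq_of_le (by omega : (n:ℤ) ≤ a + ℓ) with hb0 | hb0
    · -- a + ℓ > n : crossing of s -- T at height n lies right of 0
      have hbR : (n:ℝ) < ((a:ℝ) + (ℓ:ℝ)) := by
        have : (n:ℤ) < a + ℓ := hb0
        exact_mod_cast this
      have hsT : (intPt s).2 < (intPt (c, a + ℓ)).2 := by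
        simp only [intPt]; push_cast; linarith
      have hw := cross_mem hconv hsP hT hsT (y := (n:ℝ))
        (by simp only [intPt]; linarith) (by simp only [intPt]; push_cast; linarith)
      simp only [intPt] at hw
      push_cast at hw
      have hwle : ((s.1:ℝ) + (((n:ℝ) - (s.2:ℝ)) / (((a:ℝ) + (ℓ:ℝ)) - (s.2:ℝ))) * ((c:ℝ) - (s.1:ℝ))) ≤ 0 :=
        hTop _ hw rfl
      set t : ℝ := ((n:ℝ) - (s.2:ℝ)) / (((a:ℝ) + (ℓ:ℝ)) - (s.2:ℝ)) with htdef
      clear_value t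
      have hbs2R' : (0:ℝ) < ((a:ℝ) + (ℓ:ℝ)) - (s.2:ℝ) := by linarith
      have ht0 : 0 < t := by
        rw [htdef]; apply div_pos (by linarith) hbs2R'
      have ht1 : t < 1 := by
        rw [htdef, div_lt_one hbs2R']; linarith
      have hwval : (s.1:ℝ) + t * ((c:ℝ) - (s.1:ℝ)) = (1 - t) * (s.1:ℝ) + t * (c:ℝ) := by ring
      rw [hwval] at hwle
      nlinarith [mul_pos (by linarith : (0:ℝ) < 1 - t) (by linarith : (0:ℝ) < (s.1:ℝ)),
        mul_nonneg (le_of_lt ht0) hc0R]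
    · -- a + ℓ = n : T on row n
      have h0 : (intPt (c, a + ℓ)).2 = (n:ℝ) := by
        simp only [intPt]
        exact_mod_cast congrArg (fun z : ℤ => (z:ℝ)) hb0.symm
      have hle := hTop _ hT h0
      have hceq : c = 0 := by
        have h1 : (c:ℝ) ≤ 0 := by simpa [intPt] using hle
        have h2 : c ≤ 0 := by exact_mod_cast h1
        omega
      apply hfree 0 1
      have he : ((n:ℤ) * 0, (n:ℤ) * 1) = (c, a + ℓ) := by
        rw [Prod.mk.injEq]; omega
      rw [he]; exact hT
  -- depths
  have hd1 : (ℓ:ℤ) + 2 ≤ r.2 - a := by omega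
  have hd2 : (ℓ:ℤ) + 2 ≤ (a + ℓ) - s.2 := by omega
  have hd3 : (ℓ:ℤ) + 2 ≤ r.2 - s.2 := by omega
  have hr2aR : (0:ℝ) < (r.2:ℝ) - (a:ℝ) := by
    have : (a:ℝ) < (r.2:ℝ) := by exact_mod_cast (by omega : a < r.2)
    linarith
  have hbs2R : (0:ℝ) < ((a:ℝ) + (ℓ:ℝ)) - (s.2:ℝ) := by
    have h1 : (s.2:ℝ) < ((a + ℓ : ℤ):ℝ) := by exact_mod_cast (by omega : s.2 < a + (ℓ:ℤ))
    push_cast at h1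
    linarith
  -- trichotomy
  by_cases hA : c - r.1 ≤ r.2 - a
  · -- CASE A : ray from r in direction (1, -1)
    refine collinear_contra V P hPdef hdiam r (1, -1) (by simp) ?_
    intro j hj
    have hjZ : (j:ℤ) ≤ (ℓ:ℤ) + 1 := by exact_mod_cast hj
    have hjR0 : (0:ℝ) ≤ (j:ℝ) := by positivity
    have hjar : (a:ℝ) + (j:ℝ) ≤ (r.2:ℝ) := by
      have : a + (j:ℤ) ≤ r.2 := by omega
      exact_mod_cast this
    have hjsr : (s.2:ℝ) + (j:ℝ) ≤ (r.2:ℝ) := by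
      have : s.2 + (j:ℤ) ≤ r.2 := by omega
      exact_mod_cast this
    have hBr : (intPt (c, a)).2 < (intPt r).2 := by
      simp only [intPt]; exact_mod_cast (by omega : a < r.2)
    have hL := cross_mem hconv hB hrP hBr (y := (r.2:ℝ) - (j:ℝ))
      (by simp only [intPt]; linarith) (by simp only [intPt]; linarith)
    simp only [intPt] at hL
    have hR := cross_mem hconv hsP hrP hsr (y := (r.2:ℝ) - (j:ℝ))
      (by simp only [intPt]; linarith) (by simp only [intPt]; linarith)
    simp only [intPt] at hR
    refine horiz_mem hconv hL hR ?_ ?_ ?_ ?_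
    · simp only [intPt]; push_cast; ring
    · simp only [intPt]; push_cast; ring
    · -- left chord ≤ r1 + j
      simp only [intPt]
      have key : ((r.1:ℝ) + ((j:ℝ) * 1)) - ((c:ℝ) + (((r.2:ℝ) - (j:ℝ)) - (a:ℝ)) / ((r.2:ℝ) - (a:ℝ)) * ((r.1:ℝ) - (c:ℝ)))
          = (j:ℝ) * (((r.2:ℝ) - (a:ℝ)) - ((c:ℝ) - (r.1:ℝ))) / ((r.2:ℝ) - (a:ℝ)) := by
        field_simp
        ring
      have hAR : (0:ℝ) ≤ ((r.2:ℝ) - (a:ℝ)) - ((c:ℝ) - (r.1:ℝ)) := by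
        have : (0:ℤ) ≤ (r.2 - a) - (c - r.1) := by omega
        exact_mod_cast this
      have hnn : (0:ℝ) ≤ (j:ℝ) * (((r.2:ℝ) - (a:ℝ)) - ((c:ℝ) - (r.1:ℝ))) / ((r.2:ℝ) - (a:ℝ)) :=
        div_nonneg (mul_nonneg hjR0 hAR) (le_of_lt hr2aR)
      push_cast
      linarith [key, hnn]
    · -- r1 + j ≤ right chord
      simp only [intPt]
      have key : ((s.1:ℝ) + (((r.2:ℝ) - (j:ℝ)) - (s.2:ℝ)) / ((r.2:ℝ) - (s.2:ℝ)) * ((r.1:ℝ) - (s.1:ℝ)))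
          - ((r.1:ℝ) + ((j:ℝ) * 1))
          = (j:ℝ) * (((s.1:ℝ) - (r.1:ℝ)) - ((r.2:ℝ) - (s.2:ℝ))) / ((r.2:ℝ) - (s.2:ℝ)) := by
        field_simp
        ring
      have hAR : (0:ℝ) ≤ ((s.1:ℝ) - (r.1:ℝ)) - ((r.2:ℝ) - (s.2:ℝ)) := by
        have : (0:ℤ) ≤ (s.1 - r.1) - (r.2 - s.2) := by omega
        exact_mod_cast this
      have hnn : (0:ℝ) ≤ (j:ℝ) * (((s.1:ℝ) - (r.1:ℝ)) - ((r.2:ℝ) - (s.2:ℝ))) / ((r.2:ℝ) - (s.2:ℝ)) :=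
        div_nonneg (mul_nonneg hjR0 hAR) (le_of_lt hDpos)
      push_cast
      linarith [key, hnn]
  · by_cases hBc : s.1 - c ≤ (a + ℓ) - s.2
    · -- CASE B : ray from s in direction (-1, 1)
      refine collinear_contra V P hPdef hdiam s (-1, 1) (by simp) ?_
      intro j hj
      have hjZ : (j:ℤ) ≤ (ℓ:ℤ) + 1 := by exact_mod_cast hj
      have hjR0 : (0:ℝ) ≤ (j:ℝ) := by positivity
      have hjsr : (s.2:ℝ) + (j:ℝ) ≤ (r.2:ℝ) := by
        have : s.2 + (j:ℤ) ≤ r.2 := by omega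
        exact_mod_cast this
      have hjsb : (s.2:ℝ) + (j:ℝ) ≤ (a:ℝ) + (ℓ:ℝ) := by
        have : s.2 + (j:ℤ) ≤ a + ℓ := by omega
        exact_mod_cast this
      have hL := cross_mem hconv hsP hrP hsr (y := (s.2:ℝ) + (j:ℝ))
        (by simp only [intPt]; linarith) (by simp only [intPt]; linarith)
      simp only [intPt] at hL
      have hsT : (intPt s).2 < (intPt (c, a + ℓ)).2 := by
        simp only [intPt]; push_cast
        have : (s.2:ℝ) < (a:ℝ) + (ℓ:ℝ) := by
          have : s.2 < a + (ℓ:ℤ) := by omega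
          push_cast at this ⊢; linarith
        linarith
      have hR := cross_mem hconv hsP hT hsT (y := (s.2:ℝ) + (j:ℝ))
        (by simp only [intPt]; linarith) (by simp only [intPt]; push_cast; linarith)
      simp only [intPt] at hR
      push_cast at hR
      refine horiz_mem hconv hL hR ?_ ?_ ?_ ?_
      · simp only [intPt]; push_cast; ring
      · simp only [intPt]; push_cast; ring
      · simp only [intPt]
        have key : ((s.1:ℝ) + ((j:ℝ) * (-1))) - ((s.1:ℝ) + (((s.2:ℝ) + (j:ℝ)) - (s.2:ℝ)) / ((r.2:ℝ) - (s.2:ℝ)) * ((r.1:ℝ) - (s.1:ℝ)))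
            = (j:ℝ) * (((s.1:ℝ) - (r.1:ℝ)) - ((r.2:ℝ) - (s.2:ℝ))) / ((r.2:ℝ) - (s.2:ℝ)) := by
          field_simp
          ring
        have hAR : (0:ℝ) ≤ ((s.1:ℝ) - (r.1:ℝ)) - ((r.2:ℝ) - (s.2:ℝ)) := by
          have : (0:ℤ) ≤ (s.1 - r.1) - (r.2 - s.2) := by omega
          exact_mod_cast this
        have hnn : (0:ℝ) ≤ (j:ℝ) * (((s.1:ℝ) - (r.1:ℝ)) - ((r.2:ℝ) - (s.2:ℝ))) / ((r.2:ℝ) - (s.2:ℝ)) :=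
          div_nonneg (mul_nonneg hjR0 hAR) (le_of_lt hDpos)
        push_cast
        linarith [key, hnn]
      · simp only [intPt]
        have key : ((s.1:ℝ) + (((s.2:ℝ) + (j:ℝ)) - (s.2:ℝ)) / (((a:ℝ) + (ℓ:ℝ)) - (s.2:ℝ)) * ((c:ℝ) - (s.1:ℝ)))
            - ((s.1:ℝ) + ((j:ℝ) * (-1)))
            = (j:ℝ) * ((((a:ℝ) + (ℓ:ℝ)) - (s.2:ℝ)) - ((s.1:ℝ) - (c:ℝ))) / (((a:ℝ) + (ℓ:ℝ)) - (s.2:ℝ)) := by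
          field_simp
          ring
        have hAR : (0:ℝ) ≤ (((a:ℝ) + (ℓ:ℝ)) - (s.2:ℝ)) - ((s.1:ℝ) - (c:ℝ)) := by
          have : (0:ℤ) ≤ ((a + ℓ) - s.2) - (s.1 - c) := by omega
          exact_mod_cast this
        have hnn : (0:ℝ) ≤ (j:ℝ) * ((((a:ℝ) + (ℓ:ℝ)) - (s.2:ℝ)) - ((s.1:ℝ) - (c:ℝ))) / (((a:ℝ) + (ℓ:ℝ)) - (s.2:ℝ)) :=
          div_nonneg (mul_nonneg hjR0 hAR) (le_of_lt hbs2R)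
        push_cast
        linarith [key, hnn]
    · -- CASE C : pigeonhole
      push_neg at hA hBc
      have hgrid : ∀ i jj : ℕ, i ≤ ℓ → jj ≤ ℓ → intPt (c - (jj:ℤ) + (i:ℤ), a + (jj:ℤ)) ∈ P := by
        intro i jj hi hjj
        have hjjR0 : (0:ℝ) ≤ (jj:ℝ) := by positivity
        have hjjl : (jj:ℝ) ≤ (ℓ:ℝ) := by exact_mod_cast hjj
        have hiR0 : (0:ℝ) ≤ (i:ℝ) := by positivity
        have hil : (i:ℝ) ≤ (ℓ:ℝ) := by exact_mod_cast hi
        have hBr : (intPt (c, a)).2 < (intPt r).2 := by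
          simp only [intPt]; exact_mod_cast (by omega : a < r.2)
        have hy2 : (a:ℝ) + (jj:ℝ) ≤ (r.2:ℝ) := by
          have : a + (jj:ℤ) ≤ r.2 := by omega
          exact_mod_cast this
        have hL := cross_mem hconv hB hrP hBr (y := (a:ℝ) + (jj:ℝ))
          (by simp only [intPt]; linarith) (by simp only [intPt]; linarith)
        simp only [intPt] at hL
        have hsT : (intPt s).2 < (intPt (c, a + ℓ)).2 := by
          simp only [intPt]; push_cast
          have : s.2 < a + (ℓ:ℤ) := by omega
          have h2 : (s.2:ℝ) < ((a + (ℓ:ℤ) : ℤ):ℝ) := by exact_mod_cast this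
          push_cast at h2
          linarith
        have hsaR : (s.2:ℝ) ≤ (a:ℝ) := by exact_mod_cast (by omega : s.2 ≤ a)
        have hy2' : (a:ℝ) + (jj:ℝ) ≤ (a:ℝ) + (ℓ:ℝ) := by linarith
        have hR := cross_mem hconv hsP hT hsT (y := (a:ℝ) + (jj:ℝ))
          (by simp only [intPt]; linarith) (by simp only [intPt]; push_cast; linarith)
        simp only [intPt] at hR
        push_cast at hR
        refine horiz_mem hconv hL hR ?_ ?_ ?_ ?_
        · simp only [intPt]; push_cast; ring
        · simp only [intPt]; push_cast; ring
        · simp only [intPt]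
          have key : ((c:ℝ) - (jj:ℝ)) - ((c:ℝ) + (((a:ℝ) + (jj:ℝ)) - (a:ℝ)) / ((r.2:ℝ) - (a:ℝ)) * ((r.1:ℝ) - (c:ℝ)))
              = (jj:ℝ) * (((c:ℝ) - (r.1:ℝ)) - ((r.2:ℝ) - (a:ℝ))) / ((r.2:ℝ) - (a:ℝ)) := by
            field_simp
            ring
          have hAR : (0:ℝ) ≤ ((c:ℝ) - (r.1:ℝ)) - ((r.2:ℝ) - (a:ℝ)) := by
            have : (0:ℤ) ≤ (c - r.1) - (r.2 - a) := by omega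
            exact_mod_cast this
          have hnn : (0:ℝ) ≤ (jj:ℝ) * (((c:ℝ) - (r.1:ℝ)) - ((r.2:ℝ) - (a:ℝ))) / ((r.2:ℝ) - (a:ℝ)) :=
            div_nonneg (mul_nonneg hjjR0 hAR) (le_of_lt hr2aR)
          push_cast
          linarith [key, hnn]
        · simp only [intPt]
          have key : ((s.1:ℝ) + (((a:ℝ) + (jj:ℝ)) - (s.2:ℝ)) / (((a:ℝ) + (ℓ:ℝ)) - (s.2:ℝ)) * ((c:ℝ) - (s.1:ℝ)))
              - ((c:ℝ) + ((ℓ:ℝ) - (jj:ℝ)))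
              = ((ℓ:ℝ) - (jj:ℝ)) * (((s.1:ℝ) - (c:ℝ)) - (((a:ℝ) + (ℓ:ℝ)) - (s.2:ℝ))) / (((a:ℝ) + (ℓ:ℝ)) - (s.2:ℝ)) := by
            field_simp
            ring
          have hAR : (0:ℝ) ≤ ((s.1:ℝ) - (c:ℝ)) - (((a:ℝ) + (ℓ:ℝ)) - (s.2:ℝ)) := by
            have : (0:ℤ) ≤ (s.1 - c) - ((a + ℓ) - s.2) := by omega
            exact_mod_cast this
          have hnn : (0:ℝ) ≤ ((ℓ:ℝ) - (jj:ℝ)) * (((s.1:ℝ) - (c:ℝ)) - (((a:ℝ) + (ℓ:ℝ)) - (s.2:ℝ))) / (((a:ℝ) + (ℓ:ℝ)) - (s.2:ℝ)) :=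
            div_nonneg (mul_nonneg (by linarith) hAR) (le_of_lt hbs2R)
          push_cast
          linarith [key, hnn]
      -- pigeonhole setup
      haveI : NeZero (ℓ + 1) := ⟨Nat.succ_ne_zero ℓ⟩
      set g : (Fin (ℓ+1) × Fin (ℓ+1)) ⊕ Unit → ℤ × ℤ := fun γ =>
        match γ with
        | Sum.inl (i, jj) => (c - (jj:ℤ) + (i:ℤ), a + (jj:ℤ))
        | Sum.inr _ => r
        with hg
      have hgP : ∀ γ, intPt (g γ) ∈ P := by
        rintro (⟨i, jj⟩ | ⟨⟩)
        · exact hgrid i jj (Nat.lt_succ_iff.mp i.isLt) (Nat.lt_succ_iff.mp jj.isLt)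
        · exact hrP
      have hgsnd_le : ∀ (i jj : Fin (ℓ+1)), a + ((jj:ℕ):ℤ) < r.2 := by
        intro i jj
        have : ((jj:ℕ):ℤ) ≤ ℓ := by exact_mod_cast (Nat.lt_succ_iff.mp jj.isLt)
        omega
      have hginj : Function.Injective g := by
        rintro (⟨i, jj⟩ | ⟨⟩) (⟨i', jj'⟩ | ⟨⟩) he
        · simp only [hg, Prod.mk.injEq] at he
          obtain ⟨h1, h2⟩ := he
          have hjj : ((jj:ℕ):ℤ) = ((jj':ℕ):ℤ) := by omega
          have hii : ((i:ℕ):ℤ) = ((i':ℕ):ℤ) := by omega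
          have e1 : jj = jj' := Fin.ext (by exact_mod_cast hjj)
          have e2 : i = i' := Fin.ext (by exact_mod_cast hii)
          rw [e1, e2]
        · exfalso
          simp only [hg] at he
          have h2 : a + ((jj:ℕ):ℤ) = r.2 := congrArg Prod.snd he
          have := hgsnd_le i jj
          omega
        · exfalso
          simp only [hg] at he
          have h2 : r.2 = a + ((jj':ℕ):ℤ) := congrArg Prod.snd he
          have := hgsnd_le i' jj'
          omega
        · rfl
      set φ : ((Fin (ℓ+1) × Fin (ℓ+1)) ⊕ Unit) → ZMod (ℓ+1) × ZMod (ℓ+1) := fun γ =>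
        (((g γ).1 : ZMod (ℓ+1)), ((g γ).2 : ZMod (ℓ+1))) with hφ
      have hcard : Fintype.card (ZMod (ℓ+1) × ZMod (ℓ+1))
          < Fintype.card ((Fin (ℓ+1) × Fin (ℓ+1)) ⊕ Unit) := by
        simp [ZMod.card]
      obtain ⟨γ1, γ2, hne, heq⟩ := Fintype.exists_ne_map_eq_of_card_lt φ hcard
      have hxy : g γ1 ≠ g γ2 := fun h => hne (hginj h)
      have heq1 : (((g γ1).1 : ℤ) : ZMod (ℓ+1)) = (((g γ2).1 : ℤ) : ZMod (ℓ+1)) := by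
        have := congrArg Prod.fst heq
        simpa [hφ] using this
      have heq2 : (((g γ1).2 : ℤ) : ZMod (ℓ+1)) = (((g γ2).2 : ℤ) : ZMod (ℓ+1)) := by
        have := congrArg Prod.snd heq
        simpa [hφ] using this
      have hdvd1 : ((ℓ:ℤ) + 1) ∣ ((g γ2).1 - (g γ1).1) := by
        have h1 := (ZMod.intCast_eq_intCast_iff _ _ _).mp heq1
        have h2 := Int.ModEq.dvd h1
        simpa using h2
      have hdvd2 : ((ℓ:ℤ) + 1) ∣ ((g γ2).2 - (g γ1).2) := by
        have h1 := (ZMod.intCast_eq_intCast_iff _ _ _).mp heq2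
        have h2 := Int.ModEq.dvd h1
        simpa using h2
      obtain ⟨k1, hk1⟩ := hdvd1
      obtain ⟨k2, hk2⟩ := hdvd2
      have hdne : ((k1, k2) : ℤ × ℤ) ≠ 0 := by
        intro h
        rw [Prod.ext_iff] at h
        simp only [Prod.fst_zero, Prod.snd_zero] at h
        apply hxy
        refine Prod.ext ?_ ?_
        · rw [h.1] at hk1; simp at hk1; omega
        · rw [h.2] at hk2; simp at hk2; omega
      refine collinear_contra V P hPdef hdiam (g γ1) (k1, k2) hdne ?_
      intro j hj
      have hl1 : (0:ℝ) < (ℓ:ℝ) + 1 := by positivity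
      set t : ℝ := (j:ℝ) / ((ℓ:ℝ) + 1) with htdef
      have ht0 : 0 ≤ t := by rw [htdef]; positivity
      have ht1 : t ≤ 1 := by
        rw [htdef, div_le_one hl1]
        exact_mod_cast hj
      have hcmb := combo_mem hconv (hgP γ1) (hgP γ2) ht0 ht1
      have htl : t * ((ℓ:ℝ) + 1) = (j:ℝ) := by
        rw [htdef]; field_simp
      have hcast1 : (((g γ2).1 : ℤ) : ℝ) = (((g γ1).1 : ℤ) : ℝ) + ((ℓ:ℝ) + 1) * (k1:ℝ) := by
        have h' : ((g γ2).1 : ℤ) = (g γ1).1 + ((ℓ:ℤ) + 1) * k1 := by linarith [hk1]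
        rw [h']; push_cast; ring
      have hcast2 : (((g γ2).2 : ℤ) : ℝ) = (((g γ1).2 : ℤ) : ℝ) + ((ℓ:ℝ) + 1) * (k2:ℝ) := by
        have h' : ((g γ2).2 : ℤ) = (g γ1).2 + ((ℓ:ℤ) + 1) * k2 := by linarith [hk2]
        rw [h']; push_cast; ring
      have hef : ((1 - t) * (intPt (g γ1)).1 + t * (intPt (g γ2)).1,
                  (1 - t) * (intPt (g γ1)).2 + t * (intPt (g γ2)).2)
          = intPt ((g γ1).1 + (j:ℤ) * (k1, k2).1, (g γ1).2 + (j:ℤ) * (k1, k2).2) := by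
        simp only [intPt]
        rw [Prod.mk.injEq]
        constructor
        · rw [hcast1]
          push_cast
          linear_combination (k1:ℝ) * htl
        · rw [hcast2]
          push_cast
          linear_combination (k2:ℝ) * htl
      rw [hef] at hcmb
      exact hcmb

/-- Extract slice and side information from a horizontal-segment split. -/
lemma split_horiz {P : Set (ℝ × ℝ)} {X1 X2 Y : ℝ} (hX : X1 ≠ X2)
    (h : SegSplits P (X1, Y) (X2, Y)) :
    (∀ z ∈ P, z.2 = Y → (min X1 X2 ≤ z.1 ∧ z.1 ≤ max X1 X2)) ∧
    (∃ z ∈ P, z.2 < Y) ∧ (∃ z ∈ P, Y < z.2) := by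
  obtain ⟨A, B, C, hne, e1, e2, hsub, ⟨zl, hzlP, hzl⟩, ⟨zg, hzgP, hzg⟩⟩ := h
  simp only at e1 e2
  have hA : A = 0 := by
    have h0 : A * (X1 - X2) = 0 := by linarith
    rcases mul_eq_zero.mp h0 with h0 | h0
    · exact h0
    · exact absurd (by linarith : X1 = X2) hX
  have hBne : B ≠ 0 := fun hB => hne ⟨hA, hB⟩
  have hC : C = B * Y := by rw [hA] at e1; linarith
  refine ⟨?_, ?_⟩
  · intro z hz hzy
    have hzL : A * z.1 + B * z.2 = C := by rw [hA, hC, hzy]; ring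
    obtain ⟨ta, tb, hta, htb, htab, heq⟩ := hsub z hz hzL
    have h1 : ta * X1 + tb * X2 = z.1 := by
      have := congrArg Prod.fst heq
      simpa [Prod.smul_fst, smul_eq_mul] using this
    have keymin : ta * (min X1 X2) + tb * (min X1 X2) = min X1 X2 := by
      linear_combination (min X1 X2) * htab
    have keymax : ta * (max X1 X2) + tb * (max X1 X2) = max X1 X2 := by
      linear_combination (max X1 X2) * htab
    constructor
    · linarith [mul_le_mul_of_nonneg_left (min_le_left X1 X2) hta,
        mul_le_mul_of_nonneg_left (min_le_right X1 X2) htb]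
    · linarith [mul_le_mul_of_nonneg_left (le_max_left X1 X2) hta,
        mul_le_mul_of_nonneg_left (le_max_right X1 X2) htb]
  · rw [hA] at hzl hzg
    rw [hC] at hzl hzg
    simp only [zero_mul, zero_add] at hzl hzg
    rcases lt_trichotomy B 0 with hB | hB | hB
    · constructor
      · exact ⟨zg, hzgP, by nlinarith⟩
      · exact ⟨zl, hzlP, by nlinarith⟩
    · exact absurd hB hBne
    · constructor
      · exact ⟨zl, hzlP, by nlinarith⟩
      · exact ⟨zg, hzgP, by nlinarith⟩

/-- The reflected version of `core` (mirror y ↦ n - y). -/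
lemma coreMirror (n ℓ : ℕ) (hn : 2 ≤ n) (V : Finset (ℤ × ℤ)) (P : Set (ℝ × ℝ))
    (hPdef : P = convexHull ℝ (intPt '' ↑V))
    (hfree : FreeOfLattice n P)
    (hdiam : ∀ L, IsLine L → (P ∩ intPts ∩ L).ncard ≤ ℓ + 1)
    (c a : ℤ) (hc0 : 0 ≤ c) (hcn : c ≤ (n : ℤ))
    (hB : intPt (c, a) ∈ P) (hT : intPt (c, a + ℓ) ∈ P)
    (hBot' : ∀ z ∈ P, z.2 = 0 → z.1 ≤ 0)
    (hTop' : ∀ z ∈ P, z.2 = (n : ℝ) → (n : ℝ) ≤ z.1)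
    (habove : ∃ z ∈ P, (n : ℝ) < z.2)
    (hbelow : ∃ z ∈ P, z.2 < 0) : False := by
  classical
  -- the reflection as an affine map
  set Lm : (ℝ × ℝ) →ₗ[ℝ] (ℝ × ℝ) := LinearMap.prodMap LinearMap.id (-LinearMap.id) with hLm
  set F : (ℝ × ℝ) →ᵃ[ℝ] (ℝ × ℝ) :=
    { toFun := fun z => (z.1, (n : ℝ) - z.2)
      linear := Lm
      map_vadd' := by
        intro p v
        simp only [hLm, LinearMap.prodMap_apply, LinearMap.id_coe, id_eq, LinearMap.neg_apply]
        ext <;> simp [vadd_eq_add] <;> ring } with hF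
  have hFapp : ∀ z : ℝ × ℝ, F z = (z.1, (n : ℝ) - z.2) := fun z => rfl
  have hFinj : Function.Injective (F : (ℝ × ℝ) → (ℝ × ℝ)) := by
    intro w w' hww
    rw [hFapp, hFapp, Prod.mk.injEq] at hww
    exact Prod.ext hww.1 (by linarith [hww.2])
  set P' : Set (ℝ × ℝ) := (fun z : ℝ × ℝ => (z.1, (n : ℝ) - z.2)) '' P with hP'
  set V' : Finset (ℤ × ℤ) := V.image (fun p : ℤ × ℤ => (p.1, (n : ℤ) - p.2)) with hV'
  have himgP : P' = ⇑F '' P := by rw [hP']; rfl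
  have hPdef' : P' = convexHull ℝ (intPt '' ↑V') := by
    rw [himgP, hPdef, AffineMap.image_convexHull]
    congr 1
    rw [hV']
    ext z
    constructor
    · rintro ⟨_, ⟨p, hp, rfl⟩, rfl⟩
      refine ⟨(p.1, (n:ℤ) - p.2), ?_, ?_⟩
      · simp only [hV', Finset.coe_image, Set.mem_image, Finset.mem_coe]
        exact ⟨p, by exact_mod_cast hp, rfl⟩
      · rw [hFapp]
        simp only [intPt]
        rw [Prod.mk.injEq]
        exact ⟨rfl, by push_cast; ring⟩
    · rintro ⟨q, hq, rfl⟩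
      simp only [Finset.coe_image, mem_image, Finset.mem_coe] at hq
      obtain ⟨p, hp, rfl⟩ := hq
      refine ⟨intPt p, ⟨p, by simpa using hp, rfl⟩, ?_⟩
      rw [hFapp]
      simp only [intPt]
      rw [Prod.mk.injEq]
      exact ⟨rfl, by push_cast; ring⟩
  have hfree' : FreeOfLattice n P' := by
    intro u v hmem
    rw [hP'] at hmem
    obtain ⟨w, hw, hweq⟩ := hmem
    rw [Prod.mk.injEq] at hweq
    apply hfree u (1 - v)
    have hw1 : w.1 = (((n:ℤ) * u : ℤ) : ℝ) := by
      have := hweq.1; simpa [intPt] using this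
    have hw2 : w.2 = (((n:ℤ) * (1 - v) : ℤ) : ℝ) := by
      have h2 := hweq.2
      simp only [intPt] at h2
      push_cast at h2 ⊢
      linarith
    have : intPt ((n:ℤ) * u, (n:ℤ) * (1 - v)) = w := by
      rw [Prod.ext_iff]
      exact ⟨hw1.symm, hw2.symm⟩
    rw [this]
    exact hw
  have hdiam' : ∀ L, IsLine L → (P' ∩ intPts ∩ L).ncard ≤ ℓ + 1 := by
    rintro L' ⟨A, B, C, hne, rfl⟩
    set L : Set (ℝ × ℝ) := {z : ℝ × ℝ | A * z.1 + (-B) * z.2 = C - B * n} with hLdef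
    have hline : IsLine L := ⟨A, -B, C - B * n, by
      rintro ⟨h1, h2⟩; exact hne ⟨h1, neg_eq_zero.mp h2⟩, rfl⟩
    have himg : P' ∩ intPts ∩ {z : ℝ × ℝ | A * z.1 + B * z.2 = C}
        = (fun z : ℝ × ℝ => (z.1, (n : ℝ) - z.2)) '' (P ∩ intPts ∩ L) := by
      ext z
      constructor
      · rintro ⟨⟨hzP', hzI⟩, hzL'⟩
        rw [hP'] at hzP'
        obtain ⟨w, hw, rfl⟩ := hzP'
        refine ⟨w, ⟨⟨hw, ?_⟩, ?_⟩, rfl⟩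
        · obtain ⟨p, hp⟩ := hzI
          rw [Prod.ext_iff] at hp
          simp only [intPt] at hp
          refine ⟨(p.1, (n:ℤ) - p.2), ?_⟩
          rw [Prod.ext_iff]
          simp only [intPt]
          refine ⟨hp.1, ?_⟩
          push_cast
          have h2 := hp.2
          linarith
        · simp only [hLdef, mem_setOf_eq]
          simp only [mem_setOf_eq] at hzL'
          linarith
      · rintro ⟨w, ⟨⟨hwP, hwI⟩, hwL⟩, rfl⟩
        refine ⟨⟨⟨w, hwP, rfl⟩, ?_⟩, ?_⟩
        · obtain ⟨p, hp⟩ := hwI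
          refine ⟨(p.1, (n:ℤ) - p.2), ?_⟩
          rw [hp]
          rw [Prod.ext_iff]
          simp only [intPt]
          exact ⟨trivial, by push_cast; ring⟩
        · simp only [mem_setOf_eq]
          simp only [hLdef, mem_setOf_eq] at hwL
          linarith
    rw [himg]
    have hinj2 : Function.Injective (fun z : ℝ × ℝ => (z.1, (n : ℝ) - z.2)) := by
      intro w w' hww
      simp only [Prod.mk.injEq] at hww
      exact Prod.ext hww.1 (by linarith [hww.2])
    rw [Set.ncard_image_of_injective _ hinj2]
    exact hdiam L hline
  have hmemP' : ∀ w ∈ P, (w.1, (n:ℝ) - w.2) ∈ P' := by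
    intro w hw
    rw [hP']
    exact ⟨w, hw, rfl⟩
  have hB' : intPt (c, (n:ℤ) - a - ℓ) ∈ P' := by
    have := hmemP' _ hT
    have he : ((intPt (c, a + ℓ)).1, (n:ℝ) - (intPt (c, a + ℓ)).2) = intPt (c, (n:ℤ) - a - ℓ) := by
      simp only [intPt]
      rw [Prod.mk.injEq]
      constructor
      · rfl
      · push_cast; ring
    rwa [he] at this
  have hT' : intPt (c, ((n:ℤ) - a - ℓ) + ℓ) ∈ P' := by
    have := hmemP' _ hB
    have he : ((intPt (c, a)).1, (n:ℝ) - (intPt (c, a)).2) = intPt (c, ((n:ℤ) - a - ℓ) + ℓ) := by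
      simp only [intPt]
      rw [Prod.mk.injEq]
      constructor
      · rfl
      · push_cast; ring
    rwa [he] at this
  have hTopP' : ∀ z ∈ P', z.2 = (n : ℝ) → z.1 ≤ 0 := by
    rintro z hz hzy
    rw [hP'] at hz
    obtain ⟨w, hw, rfl⟩ := hz
    simp only at hzy
    have hw2 : w.2 = 0 := by linarith
    exact hBot' w hw hw2
  have hBotP' : ∀ z ∈ P', z.2 = 0 → (n : ℝ) ≤ z.1 := by
    rintro z hz hzy
    rw [hP'] at hz
    obtain ⟨w, hw, rfl⟩ := hz
    simp only at hzy
    have hw2 : w.2 = (n:ℝ) := by linarith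
    exact hTop' w hw hw2
  have haboveP' : ∃ z ∈ P', (n : ℝ) < z.2 := by
    obtain ⟨w, hw, hw2⟩ := hbelow
    exact ⟨(w.1, (n:ℝ) - w.2), hmemP' w hw, by simp only []; linarith⟩
  have hbelowP' : ∃ z ∈ P', z.2 < 0 := by
    obtain ⟨w, hw, hw2⟩ := habove
    exact ⟨(w.1, (n:ℝ) - w.2), hmemP' w hw, by simp only []; linarith⟩
  exact core n ℓ hn V' P' hPdef' hfree' hdiam' c ((n:ℤ) - a - ℓ) hc0 hcn hB' hT'
    hTopP' hBotP' haboveP' hbelowP'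


end Stmt16

open Stmt16 in
/-- Lemma: under the hypotheses of the previous lemma, the segments `[(0,n),(-n,n)]` and
`[(n,0),(2n,0)]` cannot both split `P`, and likewise the segments `[(0,0),(-n,0)]` and
`[(n,n),(2n,n)]` cannot both split `P`. -/
theorem stmt16 (n : ℕ) (hn : 2 ≤ n) (P : Set (ℝ × ℝ)) (hP : IsConvexIntegerPolygon P)
    (hfree : FreeOfLattice n P)
    (ℓ : ℕ) (hdiam : LatticeDiamIs P ℓ)
    (a c : ℤ) (hc0 : 0 ≤ c) (hcn : c ≤ (n : ℤ))
    (hseg : segment ℝ ((c : ℝ), (a : ℝ)) ((c : ℝ), ((a + (ℓ : ℤ) : ℤ) : ℝ)) ⊆ P) :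
    ¬(SegSplits P (0, (n : ℝ)) (-(n : ℝ), (n : ℝ)) ∧
        SegSplits P ((n : ℝ), 0) ((2 * n : ℝ), 0)) ∧
    ¬(SegSplits P (0, 0) (-(n : ℝ), 0) ∧
        SegSplits P ((n : ℝ), (n : ℝ)) ((2 * n : ℝ), (n : ℝ))) := by
  obtain ⟨V, hPdef, _⟩ := hP
  have hnR : (0:ℝ) < (n:ℝ) := by exact_mod_cast (by omega : 0 < n)
  have hB : intPt (c, a) ∈ P := hseg (left_mem_segment ℝ _ _)
  have hT : intPt (c, a + (ℓ:ℤ)) ∈ P := hseg (right_mem_segment ℝ _ _)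
  constructor
  · rintro ⟨h1, h2⟩
    obtain ⟨hslice1, _, habove1⟩ := split_horiz (by intro h; linarith : (0:ℝ) ≠ -(n:ℝ)) h1
    obtain ⟨hslice2, hbelow2, _⟩ := split_horiz (by intro h; linarith : (n:ℝ) ≠ (2*n:ℝ)) h2
    refine core n ℓ hn V P hPdef hfree hdiam.2 c a hc0 hcn hB hT ?_ ?_ habove1 hbelow2
    · intro z hz hzy
      have := (hslice1 z hz hzy).2
      have hmax : max (0:ℝ) (-(n:ℝ)) = 0 := max_eq_left (by linarith)
      linarith [hmax ▸ this]
    · intro z hz hzy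
      have := (hslice2 z hz hzy).1
      have hmin : min ((n:ℝ)) (2*n:ℝ) = (n:ℝ) := min_eq_left (by linarith)
      linarith [hmin ▸ this]
  · rintro ⟨h1, h2⟩
    obtain ⟨hslice1, hbelow1, _⟩ := split_horiz (by intro h; linarith : (0:ℝ) ≠ -(n:ℝ)) h1
    obtain ⟨hslice2, _, habove2⟩ := split_horiz (by intro h; linarith : (n:ℝ) ≠ (2*n:ℝ)) h2
    refine coreMirror n ℓ hn V P hPdef hfree hdiam.2 c a hc0 hcn hB hT ?_ ?_ habove2 hbelow1
    · intro z hz hzy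
      have := (hslice1 z hz hzy).2
      have hmax : max (0:ℝ) (-(n:ℝ)) = 0 := max_eq_left (by linarith)
      linarith [hmax ▸ this]
    · intro z hz hzy
      have := (hslice2 z hz hzy).1
      have hmin : min ((n:ℝ)) (2*n:ℝ) = (n:ℝ) := min_eq_left (by linarith)
      linarith [hmin ▸ this]
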